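/- If a, b ∈ [0,1] satisfy b ≥ f_∞(a)² where f_∞(z) = √(1 - (2/√3)√z) for z ∈ [0,1/3] and f_∞(z) = (√3/2)(1-z) for z ∈ [1/3,1], then max(a, b) ≥ 1/3. -/

import Mathlib

open Real

theorem stmt_8 (f : ℝ → ℝ)
    (hf : ∀ z, f z = if z ≤ 1 / 3 then Real.sqrt (1 - (2 / Real.sqrt 3) * Real.sqrt z)
                     else (Real.sqrt 3 / 2) * (1 - z))
    (a b : ℝ) (ha : a ∈ Set.Icc (0:ℝ) 1) (hb : b ∈ Set.Icc (0:ℝ) 1)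
    (h : (f a) ^ 2 ≤ b) :
    1 / 3 ≤ max a b := by
  by_cases hc : a ≤ 1 / 3
  · -- show b ≥ 1/3
    have hs3 : Real.sqrt 3 > 0 := Real.sqrt_pos.mpr (by norm_num)
    have hsa : Real.sqrt a ≤ 1 / Real.sqrt 3 := by
      have : Real.sqrt a ≤ Real.sqrt (1 / 3) := Real.sqrt_le_sqrt hc
      have h13 : Real.sqrt (1 / 3) = 1 / Real.sqrt 3 := by
        rw [Real.sqrt_div' 1 (by norm_num), Real.sqrt_one]
      linarith [this, h13 ▸ this]
    have key : (2 / Real.sqrt 3) * Real.sqrt a ≤ 2 / 3 := by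
      have : (2 / Real.sqrt 3) * Real.sqrt a ≤ (2 / Real.sqrt 3) * (1 / Real.sqrt 3) := by
        apply mul_le_mul_of_nonneg_left hsa (by positivity)
      have h33 : Real.sqrt 3 * Real.sqrt 3 = 3 := Real.mul_self_sqrt (by norm_num)
      have : (2 / Real.sqrt 3) * (1 / Real.sqrt 3) = 2 / 3 := by
        field_simp
        rw [Real.sq_sqrt (by norm_num : (0:ℝ) ≤ 3)]
      linarith [mul_le_mul_of_nonneg_left hsa (show (0:ℝ) ≤ 2 / Real.sqrt 3 by positivity), this]
    have hnn : (0:ℝ) ≤ 1 - (2 / Real.sqrt 3) * Real.sqrt a := by linarith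
    have hfa : (f a) ^ 2 = 1 - (2 / Real.sqrt 3) * Real.sqrt a := by
      rw [hf a, if_pos hc, Real.sq_sqrt hnn]
    have : (1:ℝ) / 3 ≤ b := by
      have : (1:ℝ) / 3 ≤ (f a) ^ 2 := by rw [hfa]; linarith
      linarith
    exact le_trans this (le_max_right a b)
  · exact le_trans (le_of_not_ge hc) (le_max_left a b)
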